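/- Let q₁, q₂, q₁', q₂' be positive integers such that q₁ + q₂ + sqrt(q₁² + q₂²) = q₁' + q₂' + sqrt(q₁'² + q₂'²), and suppose neither q₁² + q₂² nor q₁'² + q₂'² is a perfect square. Then {q₁, q₂} = {q₁', q₂'}. -/

import Mathlib

theorem stmt11 (q₁ q₂ q₁' q₂' : ℤ) (h₁ : 0 < q₁) (h₂ : 0 < q₂) (h₁' : 0 < q₁') (h₂' : 0 < q₂')
    (heq : (q₁ : ℝ) + q₂ + Real.sqrt ((q₁ : ℝ) ^ 2 + (q₂ : ℝ) ^ 2)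
        = (q₁' : ℝ) + q₂' + Real.sqrt ((q₁' : ℝ) ^ 2 + (q₂' : ℝ) ^ 2))
    (hns : ¬ ∃ r : ℤ, q₁ ^ 2 + q₂ ^ 2 = r ^ 2)
    (hns' : ¬ ∃ r : ℤ, q₁' ^ 2 + q₂' ^ 2 = r ^ 2) :
    (q₁ = q₁' ∧ q₂ = q₂') ∨ (q₁ = q₂' ∧ q₂ = q₁') := by
  set m : ℤ := q₁ ^ 2 + q₂ ^ 2 with hm
  set m' : ℤ := q₁' ^ 2 + q₂' ^ 2 with hm'
  have hm0 : (0:ℤ) ≤ m := by positivity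
  have hm0' : (0:ℤ) ≤ m' := by positivity
  have hirr : Irrational (Real.sqrt (m : ℝ)) := by
    rw [irrational_sqrt_intCast_iff_of_nonneg hm0]
    rintro ⟨r, hr⟩
    exact hns ⟨r, by rw [hr]; ring⟩
  have hirr' : Irrational (Real.sqrt ((m' : ℝ))) := by
    rw [irrational_sqrt_intCast_iff_of_nonneg hm0']
    rintro ⟨r, hr⟩
    exact hns' ⟨r, by rw [hr]; ring⟩
  -- rewrite heq in terms of m, m'
  have hmc : ((q₁:ℝ)^2 + (q₂:ℝ)^2) = (m : ℝ) := by push_cast [hm]; ring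
  have hmc' : ((q₁':ℝ)^2 + (q₂':ℝ)^2) = (m' : ℝ) := by push_cast [hm']; ring
  rw [hmc, hmc'] at heq
  set c : ℤ := q₁ + q₂ - (q₁' + q₂') with hc
  have key : Real.sqrt (m' : ℝ) = (c : ℝ) + Real.sqrt (m : ℝ) := by
    push_cast [hc]; linarith [heq]
  have hcz : c = 0 := by
    by_contra hcne
    have hsq : (m' : ℝ) = (c:ℝ)^2 + (m:ℝ) + 2 * c * Real.sqrt (m:ℝ) := by
      have h1 : Real.sqrt (m':ℝ) ^ 2 = (m':ℝ) := Real.sq_sqrt (by exact_mod_cast hm0')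
      have h2 : Real.sqrt (m:ℝ) ^ 2 = (m:ℝ) := Real.sq_sqrt (by exact_mod_cast hm0)
      calc (m':ℝ) = Real.sqrt (m':ℝ)^2 := h1.symm
        _ = ((c:ℝ) + Real.sqrt (m:ℝ))^2 := by rw [key]
        _ = (c:ℝ)^2 + (m:ℝ) + 2 * c * Real.sqrt (m:ℝ) := by rw [add_sq, h2]; ring
    have : Irrational ((2*c : ℤ) * Real.sqrt (m:ℝ)) :=
      hirr.intCast_mul (by omega)
    apply this.ne_int (m' - c^2 - m)
    push_cast
    linarith [hsq]
  have hmeq : m = m' := by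
    have : Real.sqrt (m':ℝ) = Real.sqrt (m:ℝ) := by rw [key, hcz]; simp
    have h2 : (m':ℝ) = (m:ℝ) := by
      rw [← Real.sq_sqrt (show (0:ℝ) ≤ (m':ℝ) by exact_mod_cast hm0'),
        ← Real.sq_sqrt (show (0:ℝ) ≤ (m:ℝ) by exact_mod_cast hm0), this]
    exact_mod_cast h2.symm
  have hsum : q₁ + q₂ = q₁' + q₂' := by omega
  have hsq : q₁ ^ 2 + q₂ ^ 2 = q₁' ^ 2 + q₂' ^ 2 := hmeq
  have hmul : (q₁ - q₁') * (q₁ - q₂') = 0 := by nlinarith [hsum, hsq]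
  rcases mul_eq_zero.1 hmul with h | h
  · left; constructor <;> omega
  · right; constructor <;> omega
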